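/- Let $L$ be a finite-dimensional nilpotent Lie algebra over a field $k$ of characteristic zero, let $R$ be a finite-dimensional commutative $k$-algebra, and let $Z \leq [L,L]$ be an ideal of $L$ such that $Z \otimes_k R$ is invariant under every $k$-linear automorphism of $L \otimes_k R$. Let $\varphi \in \mathrm{Aut}_k(L \otimes_k R)$, and let $\widetilde{\varphi} : L \otimes_k R \to L \otimes_k R$ be the unique $R$-linear map agreeing with $\varphi$ on $L \otimes 1$. If $\widetilde{\varphi}(v) \equiv \psi(v) \pmod{Z \otimes R}$ for some surjective $k$-linear map $\psi$ of $L \otimes R$ and all $v$, then $\widetilde{\varphi}$ is surjective, hence an $R$-linear automorphism of $L \otimes_k R$. -/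

import Mathlib

open TensorProduct

/-- let `L` be a finite-dimensional nilpotent Lie algebra over a
field `k` of characteristic zero, `R` a finite-dimensional commutative
`k`-algebra, and `Z ≤ [L,L]` an ideal whose base change `Z ⊗ R` is invariant
under every `k`-linear automorphism of `L ⊗ R`.  If `φ` is a `k`-automorphism of
`L ⊗ R`, `t` is the unique `R`-linear map agreeing with `φ` on `L ⊗ 1`, and
`t ≡ ψ (mod Z ⊗ R)` for some surjective `k`-linear `ψ`, then `t` is surjective,
hence an `R`-linear automorphism. -/
theorem stmt6 (k : Type*) [Field k] [CharZero k]
    (L : Type*) [LieRing L] [LieAlgebra k L] [FiniteDimensional k L]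
    [LieRing.IsNilpotent L]
    (R : Type*) [CommRing R] [Algebra k R] [Module.Finite k R]
    (Z : LieIdeal k L) (hZder : Z ≤ ⁅(⊤ : LieIdeal k L), (⊤ : LieIdeal k L)⁆)
    (hinv : ∀ g : (R ⊗[k] L) ≃ₗ[k] (R ⊗[k] L), (∀ u v, g ⁅u, v⁆ = ⁅g u, g v⁆) →
      Submodule.map (g.toLinearMap)
          ((Z.toSubmodule.baseChange R).restrictScalars k) =
        (Z.toSubmodule.baseChange R).restrictScalars k)
    (φ : (R ⊗[k] L) ≃ₗ[k] (R ⊗[k] L)) (hφ : ∀ u v, φ ⁅u, v⁆ = ⁅φ u, φ v⁆)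
    (t : (R ⊗[k] L) →ₗ[R] (R ⊗[k] L))
    (ht : ∀ x : L, t ((1 : R) ⊗ₜ[k] x) = φ ((1 : R) ⊗ₜ[k] x))
    (ψ : (R ⊗[k] L) →ₗ[k] (R ⊗[k] L)) (hψ : Function.Surjective ψ)
    (hcong : ∀ v, t v - ψ v ∈ Z.toSubmodule.baseChange R) :
    Function.Surjective t ∧ Function.Bijective t := by
  classical
  -- `t` on pure tensors
  have htsmul : ∀ (r : R) (x : L), t (r ⊗ₜ[k] x) = r • φ ((1 : R) ⊗ₜ[k] x) := by
    intro r x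
    have h : (r ⊗ₜ[k] x : R ⊗[k] L) = r • ((1 : R) ⊗ₜ[k] x) := by
      rw [TensorProduct.smul_tmul', smul_eq_mul, mul_one]
    rw [h, map_smul, ht]
  -- `t` is a morphism of Lie algebras
  have hlie : ∀ a b : R ⊗[k] L, t ⁅a, b⁆ = ⁅t a, t b⁆ := by
    intro a b
    induction a using TensorProduct.induction_on with
    | zero => simp
    | add a₁ a₂ h₁ h₂ => simp only [add_lie, map_add, h₁, h₂]
    | tmul r x =>
      induction b using TensorProduct.induction_on with
      | zero => simp
      | add b₁ b₂ h₁ h₂ => simp only [lie_add, map_add, h₁, h₂]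
      | tmul s y =>
        rw [LieAlgebra.ExtendScalars.bracket_tmul, htsmul, htsmul, htsmul]
        rw [show ∀ u v : R ⊗[k] L, ⁅r • u, s • v⁆ = (r * s) • ⁅u, v⁆ from fun u v => by
          rw [smul_lie, ← lie_skew, smul_lie, ← lie_skew u v, smul_neg, smul_smul, smul_neg]]
        rw [← hφ]
        congr 2
        rw [LieAlgebra.ExtendScalars.bracket_tmul, one_mul]
  set S : Submodule R (R ⊗[k] L) := LinearMap.range t with hS
  set C : ℕ → LieSubmodule R (R ⊗[k] L) (R ⊗[k] L) :=
    fun n => LieModule.lowerCentralSeries R (R ⊗[k] L) (R ⊗[k] L) n with hC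
  -- `Z ⊗ R` sits inside the derived algebra of `R ⊗ L`
  have hZC : Z.toSubmodule.baseChange R ≤ (C 1).toSubmodule := by
    have h1 : C 1 = (LieModule.lowerCentralSeries k L L 1).baseChange R := by
      rw [hC]
      exact LieSubmodule.lowerCentralSeries_tensor_eq_baseChange k R L L 1
    have h2 : (LieModule.lowerCentralSeries k L L 1 : Submodule k L)
        = (⁅(⊤ : LieIdeal k L), (⊤ : LieIdeal k L)⁆ : LieIdeal k L).toSubmodule := rfl
    rw [h1, LieSubmodule.coe_baseChange]
    have hmono : Z.toSubmodule ≤ (LieModule.lowerCentralSeries k L L 1 : Submodule k L) := by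
      rw [h2]; exact hZder
    exact Submodule.baseChange_mono R hmono
  -- base of the induction
  have hbase : (⊤ : Submodule R (R ⊗[k] L)) ≤ S ⊔ (C 1).toSubmodule := by
    intro v _
    obtain ⟨u, hu⟩ := hψ v
    have : v = t u - (t u - ψ u) := by rw [hu]; abel
    rw [this]
    exact Submodule.sub_mem _ (Submodule.mem_sup_left ⟨u, rfl⟩)
      (Submodule.mem_sup_right (hZC (hcong u)))
  -- inductive step
  have hstep : ∀ n, (⊤ : Submodule R (R ⊗[k] L)) ≤ S ⊔ (C (n+1)).toSubmodule := by
    intro n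
    induction n with
    | zero => exact hbase
    | succ n ih =>
      have hC1 : (C 1).toSubmodule ≤ S ⊔ (C (n+2)).toSubmodule := by
        have hspan := LieSubmodule.lieIdeal_oper_eq_linear_span'
          (R := R) (L := R ⊗[k] L) (M := R ⊗[k] L)
          (I := ⊤) (N := C 0)
        have hC1eq : C 1 = ⁅(⊤ : LieIdeal R (R ⊗[k] L)), C 0⁆ := by
          rw [hC]; exact LieModule.lowerCentralSeries_succ R (R ⊗[k] L) (R ⊗[k] L) 0
        rw [hC1eq, hspan, Submodule.span_le]
        rintro - ⟨x, -, m, -, rfl⟩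
        have hx := ih (Submodule.mem_top (x := x))
        have hm := ih (Submodule.mem_top (x := m))
        obtain ⟨s, hs, c, hc, rfl⟩ := Submodule.mem_sup.mp hx
        obtain ⟨s', hs', c', hc', rfl⟩ := Submodule.mem_sup.mp hm
        obtain ⟨a, rfl⟩ := hs
        obtain ⟨b, rfl⟩ := hs'
        have hss : ⁅t a, t b⁆ ∈ S := by rw [← hlie]; exact ⟨⁅a, b⁆, rfl⟩
        have hCn2 : ∀ w : R ⊗[k] L, ∀ z ∈ C (n+1), ⁅w, z⁆ ∈ C (n+2) := by
          intro w z hz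
          have : C (n+2) = ⁅(⊤ : LieIdeal R (R ⊗[k] L)), C (n+1)⁆ := by
            rw [hC]; exact LieModule.lowerCentralSeries_succ R (R ⊗[k] L) (R ⊗[k] L) (n+1)
          rw [this]
          exact LieSubmodule.lie_mem_lie (LieSubmodule.mem_top _) hz
        have expand : ⁅t a + c, t b + c'⁆
            = ⁅t a, t b⁆ + (⁅t a, c'⁆ + (-⁅t b, c⁆ + ⁅c, c'⁆)) := by
          rw [add_lie, lie_add, lie_add, ← lie_skew c (t b)]
          abel
        rw [expand]
        refine Submodule.add_mem _ (Submodule.mem_sup_left hss)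
          (Submodule.mem_sup_right ?_)
        refine Submodule.add_mem _ (hCn2 _ _ hc')
          (Submodule.add_mem _ (Submodule.neg_mem _ (hCn2 _ _ hc)) (hCn2 _ _ hc'))
      calc (⊤ : Submodule R (R ⊗[k] L)) ≤ S ⊔ (C 1).toSubmodule := hbase
        _ ≤ S ⊔ (S ⊔ (C (n+2)).toSubmodule) := sup_le_sup_left hC1 S
        _ = S ⊔ (C (n+2)).toSubmodule := by rw [← sup_assoc, sup_idem]
  -- nilpotency kills the lower central series
  obtain ⟨n, hn⟩ := LieModule.IsNilpotent.nilpotent R (R ⊗[k] L) (R ⊗[k] L)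
  have hCbot : C (n+1) = ⊥ := by
    have hle : C (n+1) ≤ C n :=
      LieModule.antitone_lowerCentralSeries R (R ⊗[k] L) (R ⊗[k] L) (Nat.le_succ n)
    have hCn : C n = ⊥ := hn
    exact le_antisymm (hCn ▸ hle) bot_le
  have hsurj : Function.Surjective t := by
    rw [← LinearMap.range_eq_top]
    have := hstep n
    rw [hCbot] at this
    simpa [hS] using le_antisymm le_top (by simpa using this)
  refine ⟨hsurj, ?_, hsurj⟩
  have : FiniteDimensional k (R ⊗[k] L) := Module.Finite.tensorProduct k R L
  have hinj := (LinearMap.injective_iff_surjective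
    (f := (t.restrictScalars k : (R ⊗[k] L) →ₗ[k] (R ⊗[k] L)))).mpr (by simpa using hsurj)
  simpa using hinj
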